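/- If x[r] − Σ_{i=2}^{r-1} ε_i[i] is partitionable for x = σ and for x = σ', then σ ≡ σ' (mod 3/(2^{gcd(r,2)} − 1)); moreover (σ + t·3/(2^{gcd(r,2)}−1))[r] − Σ_{i=2}^{r-1} ε_i[i] is partitionable for all t ≥ 0. -/

import Mathlib

/-- The ambient vector space `F_2^r`. -/
abbrev Vec (r : ℕ) := Fin r → ZMod 2

/-- A line of `PG(r-1,2)`: a 2-dimensional subspace of `F_2^r`. -/
def isLine {r : ℕ} (L : Submodule (ZMod 2) (Vec r)) : Prop :=
  Module.finrank (ZMod 2) L = 2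

/-- A point of `PG(r-1,2)`: a 1-dimensional subspace of `F_2^r`. -/
def isPoint {r : ℕ} (P : Submodule (ZMod 2) (Vec r)) : Prop :=
  Module.finrank (ZMod 2) P = 1

/-- A hyperplane of `PG(r-1,2)`: an `(r-1)`-dimensional subspace of `F_2^r`. -/
def isHyperplane {r : ℕ} (H : Submodule (ZMod 2) (Vec r)) : Prop :=
  Module.finrank (ZMod 2) H = r - 1

open scoped Classical in
/-- The number of members of the multiset `S` (of lines) contained in the subspace `H`. -/
noncomputable def linesIn {r : ℕ} (S : Multiset (Submodule (ZMod 2) (Vec r)))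
    (H : Submodule (ZMod 2) (Vec r)) : ℕ :=
  Multiset.card (S.filter (fun L => L ≤ H))

/-- An `(n,r,s)` system: a multiset of `n` lines of `PG(r-1,2)` such that every hyperplane
contains at most `s` of them and some hyperplane contains exactly `s` of them. -/
def IsSystem (r n s : ℕ) (S : Multiset (Submodule (ZMod 2) (Vec r))) : Prop :=
  Multiset.card S = n ∧ (∀ L ∈ S, isLine L) ∧
    (∀ H, isHyperplane H → linesIn S H ≤ s) ∧
    (∃ H, isHyperplane H ∧ linesIn S H = s)

open scoped Classical in
/-- The number of lines of the multiset `S` passing through the (nonzero) vector `v`. -/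
noncomputable def lineCountThrough {r : ℕ} (S : Multiset (Submodule (ZMod 2) (Vec r)))
    (v : Vec r) : ℕ :=
  Multiset.card (S.filter (fun L => v ∈ L))

open scoped Classical in
/-- The multiset `S` of lines has type `σ[r] - ∑_{i=1}^{r-1} ε_i [i]` with respect to the
chain `Flag`: the covered point multiset equals `σ·χ_V - ∑ ε_i·χ_{Flag i}`. -/
def HasType (r : ℕ) (Flag : ℕ → Submodule (ZMod 2) (Vec r)) (σ : ℕ) (ε : ℕ → ℤ)
    (S : Multiset (Submodule (ZMod 2) (Vec r))) : Prop :=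
  (∀ L ∈ S, isLine L) ∧
  ∀ v : Vec r, v ≠ 0 → (lineCountThrough S v : ℤ) =
      (σ : ℤ) - ∑ i ∈ Finset.Icc 1 (r - 1), ε i * (if v ∈ Flag i then 1 else 0)


-- ===== auxiliary lemmas =====
lemma zmod2_cases : ∀ a : ZMod 2, a = 0 ∨ a = 1 := by decide

lemma mulinv {F : Type} [Field F] {c x w : F} (hc : c ≠ 0) : c * x = w ↔ x = c⁻¹ * w := by
  constructor
  · rintro rfl; rw [inv_mul_cancel_left₀ hc]
  · rintro rfl; rw [mul_inv_cancel_left₀ hc]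

section FlineDef
variable {r : ℕ} {F : Type} [Field F] [Algebra (ZMod 2) F] (e : F ≃ₗ[ZMod 2] Vec r)

noncomputable def fline (α : F) (x : F) : Submodule (ZMod 2) (Vec r) :=
  Submodule.span (ZMod 2) {e x, e (α * x)}

lemma char2 : (1 + 1 : F) = 0 := by
  have h := map_add (algebraMap (ZMod 2) F) 1 1
  have h0 : (1 + 1 : ZMod 2) = 0 := by decide
  rw [map_one, h0, map_zero] at h
  exact h.symm

lemma mem_fline {α x : F} {v : Vec r} :
    v ∈ fline e α x ↔ v = 0 ∨ v = e x ∨ v = e (α * x) ∨ v = e ((1 + α) * x) := by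
  rw [fline, Submodule.mem_span_pair]
  have key : e ((1 + α) * x) = e x + e (α * x) := by rw [one_add_mul, map_add]
  constructor
  · rintro ⟨a, b, rfl⟩
    rcases zmod2_cases a with rfl | rfl <;> rcases zmod2_cases b with rfl | rfl <;> simp [key]
  · rintro (rfl | rfl | rfl | rfl)
    · exact ⟨0, 0, by simp⟩
    · exact ⟨1, 0, by simp⟩
    · exact ⟨0, 1, by simp⟩
    · exact ⟨1, 1, by simp [key]⟩

lemma fline_isLine {α x : F} (hx : x ≠ 0) (h0 : α ≠ 0) (h1 : α ≠ 1) :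
    isLine (fline e α x) := by
  have hax : α * x ≠ 0 := mul_ne_zero h0 hx
  have hxax : x ≠ α * x := by
    intro h
    have hz : (α - 1) * x = 0 := by linear_combination -h
    rcases mul_eq_zero.mp hz with h' | h'
    · exact h1 (sub_eq_zero.mp h')
    · exact hx h'
  have hab : e x ≠ e (α * x) := fun h => hxax (e.injective h)
  have hind : LinearIndependent (ZMod 2) ((↑) : ({e x, e (α * x)} : Set (Vec r)) → Vec r) := by
    refine (linearIndepOn_id_pair ?_ ?_ : LinearIndepOn (ZMod 2) id ({e x, e (α * x)} : Set (Vec r)))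
    · simpa using hx
    · intro a
      rcases zmod2_cases a with rfl | rfl
      · simp only [zero_smul]
        intro h
        exact hax (e.map_eq_zero_iff.mp h.symm)
      · simpa using hab
  have hcard := finrank_span_set_eq_card hind
  rw [isLine, fline, hcard, Set.toFinset_insert, Set.toFinset_singleton]
  simp [hab]

lemma fline_alpha_mul {α : F} (x : F) (h : α * α + α + 1 = 0) :
    fline e α (α * x) = fline e α x := by
  have h2 : (1 + 1 : F) = 0 := char2
  have hsq : α * α = 1 + α := by linear_combination h - (1 + α) * h2
  apply le_antisymm
  · rw [fline, Submodule.span_le]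
    intro y hy
    rcases Set.mem_insert_iff.mp hy with rfl | hy'
    · rw [SetLike.mem_coe, mem_fline]
      exact Or.inr (Or.inr (Or.inl rfl))
    · rcases Set.mem_singleton_iff.mp hy' with rfl
      rw [SetLike.mem_coe, mem_fline]
      refine Or.inr (Or.inr (Or.inr ?_))
      congr 1
      linear_combination x * hsq
  · rw [fline, Submodule.span_le]
    intro y hy
    rcases Set.mem_insert_iff.mp hy with rfl | hy'
    · rw [SetLike.mem_coe, mem_fline]
      refine Or.inr (Or.inr (Or.inr ?_))
      congr 1
      linear_combination -x * hsq - α * x * h2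
    · rcases Set.mem_singleton_iff.mp hy' with rfl
      rw [SetLike.mem_coe, mem_fline]
      exact Or.inr (Or.inl rfl)
end FlineDef

section Count
variable {r : ℕ} {F : Type} [Field F] [Fintype F] [DecidableEq F] [Algebra (ZMod 2) F]
  (e : F ≃ₗ[ZMod 2] Vec r)

open Classical Finset in
lemma count_odd (α : F) (hα0 : α ≠ 0) (hα1 : α ≠ 1) (v : Vec r) (hv : v ≠ 0) :
    lineCountThrough (Multiset.map (fline e α) ((univ.filter (fun x : F => x ≠ 0)).val)) v
      = 3 := by
  classical
  have h2 : (1 + 1 : F) = 0 := char2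
  have hβ : (1 : F) + α ≠ 0 := fun h => hα1 (by linear_combination h - h2)
  set w := e.symm v with hw
  have hwne : w ≠ 0 := by
    intro h
    apply hv
    rw [← e.apply_symm_apply v, ← hw, h, map_zero]
  have hvw : v = e w := (e.apply_symm_apply v).symm
  have hkey : ∀ x : F, (x ≠ 0 ∧ v ∈ fline e α x) ↔
      (x = w ∨ x = α⁻¹ * w ∨ x = (1 + α)⁻¹ * w) := by
    intro x
    rw [mem_fline, hvw]
    simp only [e.injective.eq_iff, EmbeddingLike.map_eq_zero_iff]
    constructor
    · rintro ⟨hx, (h | h | h | h)⟩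
      · exact absurd h hwne
      · exact Or.inl h.symm
      · exact Or.inr (Or.inl (((mulinv hα0).mp h.symm).symm ▸ rfl))
      · exact Or.inr (Or.inr (((mulinv hβ).mp h.symm).symm ▸ rfl))
    · rintro (rfl | rfl | rfl)
      · exact ⟨hwne, Or.inr (Or.inl rfl)⟩
      · refine ⟨by simp [hα0, hwne], Or.inr (Or.inr (Or.inl ?_))⟩
        rw [mul_inv_cancel_left₀ hα0]
      · refine ⟨by simp [hβ, hwne, inv_eq_zero], Or.inr (Or.inr (Or.inr ?_))⟩
        rw [mul_inv_cancel_left₀ hβ]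
  rw [lineCountThrough, Multiset.filter_map, Multiset.card_map, ← Finset.filter_val,
    ← Finset.card_def, Finset.filter_filter]
  simp only [Function.comp_apply]
  have hset : (univ.filter (fun x : F => x ≠ 0 ∧ v ∈ fline e α x)) =
      ({w, α⁻¹ * w, (1 + α)⁻¹ * w} : Finset F) := by
    ext x
    simp only [mem_filter, mem_univ, true_and, mem_insert, mem_singleton]
    exact hkey x
  rw [hset]
  have d1 : w ≠ α⁻¹ * w := by
    intro h
    apply hα1
    have h' : (α - 1) * w = 0 := by linear_combination (mulinv hα0).mpr h
    rcases mul_eq_zero.mp h' with h'' | h''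
    · exact sub_eq_zero.mp h''
    · exact absurd h'' hwne
  have d2 : w ≠ (1 + α)⁻¹ * w := by
    intro h
    apply hα0
    have h' : α * w = 0 := by linear_combination (mulinv hβ).mpr h
    rcases mul_eq_zero.mp h' with h'' | h''
    · exact h''
    · exact absurd h'' hwne
  have d3 : α⁻¹ * w ≠ (1 + α)⁻¹ * w := by
    intro h
    have hinv : α⁻¹ = (1 + α)⁻¹ := mul_right_cancel₀ hwne h
    have hae : α = 1 + α := by
      have := congrArg (·⁻¹) hinv
      simpa [inv_inv] using this
    have h01 : (0 : F) = 1 := by linear_combination hae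
    exact one_ne_zero h01.symm
  rw [Finset.card_insert_of_notMem (by simp [d1, d2]),
    Finset.card_insert_of_notMem (by simp [d3]), Finset.card_singleton]

open Classical Finset in
lemma count_even (α : F) (hroot : α * α + α + 1 = 0) (v : Vec r) (hv : v ≠ 0) :
    lineCountThrough ((Finset.image (fline e α) (univ.filter (fun x : F => x ≠ 0))).val) v
      = 1 := by
  classical
  have h2 : (1 + 1 : F) = 0 := char2
  have hα0 : α ≠ 0 := by rintro rfl; simpa using hroot
  have hα1 : α ≠ 1 := by
    rintro rfl
    have : (1 : F) = 0 := by linear_combination hroot - h2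
    exact one_ne_zero this
  have hsq : α * α = 1 + α := by linear_combination hroot - (1 + α) * h2
  set w := e.symm v with hw
  have hwne : w ≠ 0 := by
    intro h
    apply hv
    rw [← e.apply_symm_apply v, ← hw, h, map_zero]
  have hvw : v = e w := (e.apply_symm_apply v).symm
  have hfw : ∀ x : F, x ≠ 0 → v ∈ fline e α x → fline e α x = fline e α w := by
    intro x hx hvx
    rcases (mem_fline e).mp hvx with h | h | h | h
    · exact absurd h hv
    · have : w = x := e.injective (hvw ▸ h)
      rw [this]
    · have hwx : w = α * x := e.injective (hvw ▸ h)
      rw [hwx, fline_alpha_mul e x hroot]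
    · have hwx : w = (1 + α) * x := e.injective (hvw ▸ h)
      have : w = α * (α * x) := by rw [hwx]; linear_combination -x * hsq
      rw [this, fline_alpha_mul e (α * x) hroot, fline_alpha_mul e x hroot]
  have hset : (Finset.image (fline e α) (univ.filter (fun x : F => x ≠ 0))).filter
      (fun L => v ∈ L) = {fline e α w} := by
    ext L
    simp only [mem_filter, mem_image, mem_insert, mem_singleton, Finset.mem_filter,
      mem_univ, true_and]
    constructor
    · rintro ⟨⟨x, hx0, rfl⟩, hvL⟩
      exact hfw x hx0 hvL
    · rintro rfl
      refine ⟨⟨w, hwne, rfl⟩, ?_⟩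
      rw [mem_fline, hvw]
      exact Or.inr (Or.inl rfl)
  rw [lineCountThrough, ← Finset.filter_val, ← Finset.card_def, hset, Finset.card_singleton]
end Count

-- ===== additivity and sums =====
section Sums
variable {r : ℕ}

open Finset in
lemma lineCountThrough_add (S T : Multiset (Submodule (ZMod 2) (Vec r))) (v : Vec r) :
    lineCountThrough (S + T) v = lineCountThrough S v + lineCountThrough T v := by
  classical
  simp [lineCountThrough, Multiset.filter_add]

lemma lineCountThrough_nsmul (S : Multiset (Submodule (ZMod 2) (Vec r))) (n : ℕ) (v : Vec r) :
    lineCountThrough (n • S) v = n * lineCountThrough S v := by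
  induction n with
  | zero => simp [lineCountThrough]
  | succ n ih => rw [succ_nsmul, lineCountThrough_add, ih, Nat.succ_mul]

open Classical Finset in
lemma line_point_count {L : Submodule (ZMod 2) (Vec r)} (hL : isLine L) :
    (univ.filter (fun v : Vec r => v ≠ 0 ∧ v ∈ L)).card = 3 := by
  classical
  have hcard : Fintype.card L = 4 := by
    rw [Module.card_eq_pow_finrank (K := ZMod 2) (V := L), hL]
    norm_num [ZMod.card]
  have h1 : (univ.filter (fun v : Vec r => v ∈ L)).card = 4 := by
    calc (univ.filter (fun v : Vec r => v ∈ L)).card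
        = Fintype.card {v : Vec r // v ∈ L} := (Fintype.card_subtype _).symm
      _ = Fintype.card L := Fintype.card_congr (Equiv.refl _)
      _ = 4 := hcard
  have h0 : (0 : Vec r) ∈ univ.filter (fun v : Vec r => v ∈ L) := by
    simp [Submodule.zero_mem]
  have : univ.filter (fun v : Vec r => v ≠ 0 ∧ v ∈ L)
      = (univ.filter (fun v : Vec r => v ∈ L)).erase 0 := by
    ext v
    simp [Finset.mem_erase, and_comm]
  rw [this, Finset.card_erase_of_mem h0, h1]

open Finset in
lemma sum_lineCount (S : Multiset (Submodule (ZMod 2) (Vec r))) (hS : ∀ L ∈ S, isLine L) :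
    ∑ v ∈ univ.filter (fun v : Vec r => v ≠ 0), lineCountThrough S v
      = 3 * Multiset.card S := by
  classical
  revert hS
  induction S using Multiset.induction_on with
  | empty => intro _; simp [lineCountThrough]
  | cons L S ih =>
    intro hS
    have hL : isLine L := hS L (Multiset.mem_cons_self _ _)
    have hrec := ih (fun L' hL' => hS L' (Multiset.mem_cons_of_mem hL'))
    have hstep : ∀ v : Vec r, lineCountThrough (L ::ₘ S) v
        = (if v ∈ L then 1 else 0) + lineCountThrough S v := by
      intro v
      simp only [lineCountThrough, Multiset.filter_cons, Multiset.card_add]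
      congr 1
      split <;> simp
    have hsum1 : ∑ v ∈ univ.filter (fun v : Vec r => v ≠ 0), (if v ∈ L then 1 else 0)
        = ((univ.filter (fun v : Vec r => v ≠ 0)).filter (fun v => v ∈ L)).card := by
      simp [Finset.sum_boole]
    simp only [hstep]
    rw [Finset.sum_add_distrib, hrec, hsum1, Finset.filter_filter, line_point_count hL,
      Multiset.card_cons]
    ring
end Sums

-- ===== the cover =====
lemma four_pow_mod3 (k : ℕ) : (4 : ℕ) ^ k % 3 = 1 := by
  induction k with
  | zero => rfl
  | succ n ih => rw [pow_succ]; omega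

open Finset in
lemma exists_cover (r : ℕ) (hr : 3 ≤ r) :
    ∃ C : Multiset (Submodule (ZMod 2) (Vec r)),
      (∀ L ∈ C, isLine L) ∧
      ∀ v : Vec r, v ≠ 0 → lineCountThrough C v = 3 / (2 ^ Nat.gcd r 2 - 1) := by
  classical
  have hr0 : r ≠ 0 := by omega
  haveI : Fintype (GaloisField 2 r) := Fintype.ofFinite _
  have h1 : Module.finrank (ZMod 2) (GaloisField 2 r) = r := GaloisField.finrank 2 hr0
  have h2 : Module.finrank (ZMod 2) (Vec r) = r := by simp [Module.finrank_pi]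
  obtain ⟨e⟩ : Nonempty (GaloisField 2 r ≃ₗ[ZMod 2] Vec r) :=
    ⟨LinearEquiv.ofFinrankEq _ _ (h1.trans h2.symm)⟩
  have hcardF : Fintype.card (GaloisField 2 r) = 2 ^ r := by
    rw [← Nat.card_eq_fintype_card]
    exact GaloisField.card 2 r hr0
  rcases Nat.even_or_odd r with hpar | hpar
  · -- r even : a 1-cover from a root of X^2+X+1
    have hgcd : Nat.gcd r 2 = 2 := Nat.gcd_eq_right (even_iff_two_dvd.mp hpar)
    have hdvd : 3 ∣ Fintype.card (GaloisField 2 r)ˣ := by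
      rw [Fintype.card_units, hcardF]
      obtain ⟨k, rfl⟩ := hpar
      have h44 : (2 : ℕ) ^ (k + k) = 4 ^ k := by rw [← two_mul, pow_mul]; norm_num
      rw [h44]
      have h4 := four_pow_mod3 k
      omega
    haveI : Fact (Nat.Prime 3) := ⟨by norm_num⟩
    obtain ⟨u, hu⟩ := exists_prime_orderOf_dvd_card (G := (GaloisField 2 r)ˣ) 3 hdvd
    set α : GaloisField 2 r := (u : GaloisField 2 r) with hα
    have hα3 : α * α * α = 1 := by
      have hpow := pow_orderOf_eq_one u
      rw [hu] at hpow
      have hval := congrArg (Units.val) hpow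
      push_cast at hval
      rw [pow_succ, pow_succ, pow_one] at hval
      exact hval
    have hα1 : α ≠ 1 := by
      intro h
      have hu1 : u = 1 := Units.ext h
      rw [hu1, orderOf_one] at hu
      norm_num at hu
    have hroot : α * α + α + 1 = 0 := by
      have hfac : (α - 1) * (α * α + α + 1) = 0 := by linear_combination hα3
      rcases mul_eq_zero.mp hfac with h | h
      · exact absurd (sub_eq_zero.mp h) hα1
      · exact h
    refine ⟨(Finset.image (fline e α) (univ.filter (fun x : GaloisField 2 r => x ≠ 0))).val,
      ?_, ?_⟩
    · intro L hL
      rw [Finset.mem_val, Finset.mem_image] at hL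
      obtain ⟨x, hx, rfl⟩ := hL
      rw [Finset.mem_filter] at hx
      have hα0 : α ≠ 0 := by
        rintro h
        rw [h] at hroot
        simp at hroot
      exact fline_isLine e hx.2 hα0 hα1
    · intro v hv
      rw [count_even e α hroot v hv, hgcd]
      decide
  · -- r odd : a 3-cover
    have hgcd : Nat.gcd r 2 = 1 := Nat.coprime_two_right.mpr hpar
    obtain ⟨α, hα⟩ : ∃ α : GaloisField 2 r, α ∉ ({0, 1} : Finset (GaloisField 2 r)) := by
      have hlt : ({0, 1} : Finset (GaloisField 2 r)).card < Fintype.card (GaloisField 2 r) := by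
        calc ({0, 1} : Finset (GaloisField 2 r)).card ≤ 2 :=
              (Finset.card_insert_le _ _).trans (by simp)
          _ < 2 ^ r := by
              have h22 : (2:ℕ)^2 ≤ 2^r := Nat.pow_le_pow_right (by norm_num) (by omega)
              omega
          _ = Fintype.card (GaloisField 2 r) := hcardF.symm
      have hne := (Finset.card_lt_iff_ne_univ _).mp hlt
      rw [Ne, Finset.eq_univ_iff_forall] at hne
      push_neg at hne
      exact hne
    simp only [Finset.mem_insert, Finset.mem_singleton, not_or] at hα
    obtain ⟨hα0, hα1⟩ := hα
    refine ⟨Multiset.map (fline e α) ((univ.filter (fun x : GaloisField 2 r => x ≠ 0)).val),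
      ?_, ?_⟩
    · intro L hL
      rw [Multiset.mem_map] at hL
      obtain ⟨x, hx, rfl⟩ := hL
      rw [Finset.mem_val, Finset.mem_filter] at hx
      exact fline_isLine e hx.2 hα0 hα1
    · intro v hv
      rw [count_odd e α hα0 hα1 v hv, hgcd]
      decide

-- ===== main theorem =====
lemma four_pow_mod3_int (k : ℕ) : (4 : ℤ) ^ k % 3 = 1 := by
  induction k with
  | zero => rfl
  | succ n ih => rw [pow_succ]; omega

open scoped Classical in
/-- If `x[r] - ∑_{i=2}^{r-1} ε_i[i]` is partitionable for `x = σ` and `x = σ'`, then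
`σ ≡ σ' (mod 3/(2^{gcd(r,2)}-1))` and `(σ + t·3/(2^{gcd(r,2)}-1))[r] - ∑ ε_i[i]` is
partitionable for all `t ≥ 0`. -/
theorem sigma_congruence_and_shift (r : ℕ) (hr : 3 ≤ r)
    (Flag : ℕ → Submodule (ZMod 2) (Vec r))
    (hdim : ∀ i ∈ Finset.Icc 1 (r - 1), Module.finrank (ZMod 2) (Flag i) = i)
    (hmono : ∀ i j, 1 ≤ i → i ≤ j → j ≤ r - 1 → Flag i ≤ Flag j)
    (σ σ' : ℕ) (ε : ℕ → ℤ) (hε1 : ε 1 = 0)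
    (h1 : ∃ S, HasType r Flag σ ε S) (h2 : ∃ S, HasType r Flag σ' ε S) :
    ((3 / (2 ^ Nat.gcd r 2 - 1) : ℤ)) ∣ (σ : ℤ) - (σ' : ℤ) ∧
    ∀ t : ℕ, ∃ S, HasType r Flag (σ + t * (3 / (2 ^ Nat.gcd r 2 - 1))) ε S := by
  classical
  obtain ⟨S, hSl, hSc⟩ := h1
  obtain ⟨S', hS'l, hS'c⟩ := h2
  constructor
  · -- congruence
    rcases Nat.even_or_odd r with hpar | hpar
    · have hgcd : Nat.gcd r 2 = 2 := Nat.gcd_eq_right (even_iff_two_dvd.mp hpar)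
      rw [hgcd]
      norm_num
    · have hgcd : Nat.gcd r 2 = 1 := Nat.coprime_two_right.mpr hpar
      rw [hgcd]
      norm_num
      -- now need (3:ℤ) ∣ σ - σ'
      set P := Finset.univ.filter (fun v : Vec r => v ≠ 0) with hP
      set A : ℤ := ∑ v ∈ P, ∑ i ∈ Finset.Icc 1 (r - 1),
        ε i * (if v ∈ Flag i then 1 else 0) with hA
      have key : ∀ (τ : ℕ) (T : Multiset (Submodule (ZMod 2) (Vec r))),
          (∀ L ∈ T, isLine L) →
          (∀ v : Vec r, v ≠ 0 → (lineCountThrough T v : ℤ) =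
            (τ : ℤ) - ∑ i ∈ Finset.Icc 1 (r - 1), ε i * (if v ∈ Flag i then 1 else 0)) →
          (τ : ℤ) * P.card - A = 3 * Multiset.card T := by
        intro τ T hTl hTc
        have hsum := sum_lineCount T hTl
        have hsum' : ∑ v ∈ P, (lineCountThrough T v : ℤ) = 3 * Multiset.card T := by
          rw [← Nat.cast_sum]
          exact_mod_cast congrArg (Nat.cast : ℕ → ℤ) hsum
        rw [← hsum']
        rw [Finset.sum_congr rfl (fun v hv => hTc v (Finset.mem_filter.mp hv).2)]
        rw [Finset.sum_sub_distrib, Finset.sum_const, ← hA, nsmul_eq_mul, mul_comm]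
      have e1 := key σ S hSl hSc
      have e2 := key σ' S' hS'l hS'c
      -- P.card = 2^r - 1
      have hPcard : (P.card : ℤ) = 2 ^ r - 1 := by
        have : P.card = 2 ^ r - 1 := by
          rw [hP, Finset.filter_ne', Finset.card_erase_of_mem (Finset.mem_univ _),
            Finset.card_univ]
          simp
        rw [this]
        have h2r : 1 ≤ 2 ^ r := Nat.one_le_two_pow
        push_cast [h2r]
        ring
      have hmul : ((σ : ℤ) - σ') * P.card = 3 * (Multiset.card S - Multiset.card S') := by
        linear_combination e1 - e2
      have hK3 : ¬ (3 : ℤ) ∣ (P.card : ℤ) := by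
        rw [hPcard]
        obtain ⟨k, rfl⟩ := hpar
        have h4 : (4 : ℤ) ^ k % 3 = 1 := four_pow_mod3_int k
        have hpow : (2 : ℤ) ^ (2 * k + 1) = 2 * 4 ^ k := by
          rw [pow_succ, pow_mul]
          norm_num
          ring
        rw [hpow]
        omega
      have hdvd : (3 : ℤ) ∣ ((σ : ℤ) - σ') * P.card := ⟨_, hmul⟩
      rcases Int.prime_three.2.2 _ _ hdvd with h | h
      · exact h
      · exact absurd h hK3
  · -- shift
    intro t
    obtain ⟨C, hCl, hCc⟩ := exists_cover r hr
    refine ⟨S + t • C, ?_, ?_⟩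
    · intro L hL
      rcases Multiset.mem_add.mp hL with h | h
      · exact hSl L h
      · exact hCl L (Multiset.mem_nsmul.mp h).2
    · intro v hv
      rw [lineCountThrough_add, lineCountThrough_nsmul, hCc v hv]
      have := hSc v hv
      push_cast
      push_cast at this
      linarith
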